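/- Let V be a real inner product space with inner product ⟪·,·⟫ and let g be a symmetric bilinear form on V. Let H ≥ 0 and H₀ ≥ 0 be real numbers such that H²·g(x,x) ≥ H₀²·⟪x,x⟫ for all x ∈ V. Let τ, ν ∈ V satisfy g(τ,τ) = g(ν,ν) = 1 and g(τ,ν) = 0, and let τ̄, ν̄ ∈ V be orthonormal for ⟪·,·⟫. Then for all real numbers a, b not both zero, H ≥ (H₀/(a² + b²))·⟪a·τ + b·ν, a·τ̄ + b·ν̄⟫. -/

import Mathlib

open RealInnerProductSpace

/-- Lemma 3.1: pointwise mean curvature comparison at a boundary point.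
The inner product `⟪·,·⟫` models the Euclidean metric, `g` the Riemannian metric at `p`. -/
theorem mean_curvature_comparison
    {V : Type*} [NormedAddCommGroup V] [InnerProductSpace ℝ V]
    (g : LinearMap.BilinForm ℝ V) (hg : ∀ x y : V, g x y = g y x)
    (H H₀ : ℝ) (hH : 0 ≤ H) (hH₀ : 0 ≤ H₀)
    (hcomp : ∀ x : V, H₀ ^ 2 * ⟪x, x⟫ ≤ H ^ 2 * g x x)
    (τ ν : V) (hττ : g τ τ = 1) (hνν : g ν ν = 1) (hτν : g τ ν = 0)
    (τb νb : V) (hτbτb : ⟪τb, τb⟫ = 1) (hνbνb : ⟪νb, νb⟫ = 1)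
    (hτbνb : ⟪τb, νb⟫ = 0)
    (a b : ℝ) (hab : ¬ (a = 0 ∧ b = 0)) :
    H₀ / (a ^ 2 + b ^ 2) * ⟪a • τ + b • ν, a • τb + b • νb⟫ ≤ H := by
  set x : V := a • τ + b • ν with hx
  set y : V := a • τb + b • νb with hy
  have hs : 0 < a ^ 2 + b ^ 2 := by
    rcases not_and_or.mp hab with h | h <;> positivity
  have hgxx : g x x = a ^ 2 + b ^ 2 := by
    simp only [hx, map_add, map_smul, LinearMap.add_apply, LinearMap.smul_apply,
      smul_eq_mul, hττ, hνν, hτν, hg ν τ]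
    ring
  have hc : (inner ℝ νb τb : ℝ) = 0 := by rw [real_inner_comm]; exact hτbνb
  have hyy : ⟪y, y⟫ = a ^ 2 + b ^ 2 := by
    simp only [hy, inner_add_left, inner_add_right, real_inner_smul_left,
      real_inner_smul_right, hτbτb, hνbνb, hτbνb, hc]
    ring
  have hny : ‖y‖ = Real.sqrt (a ^ 2 + b ^ 2) := by
    rw [← hyy, real_inner_self_eq_norm_sq, Real.sqrt_sq (norm_nonneg y)]
  -- H₀ * ‖x‖ ≤ H * sqrt s
  have key : H₀ * ‖x‖ ≤ H * Real.sqrt (a ^ 2 + b ^ 2) := by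
    have h2 : (H₀ * ‖x‖) ^ 2 ≤ (H * Real.sqrt (a ^ 2 + b ^ 2)) ^ 2 := by
      have := hcomp x
      rw [real_inner_self_eq_norm_sq, hgxx] at this
      rw [mul_pow, mul_pow, Real.sq_sqrt hs.le]
      nlinarith
    have h1 : 0 ≤ H * Real.sqrt (a ^ 2 + b ^ 2) := by positivity
    nlinarith [mul_nonneg hH₀ (norm_nonneg x)]
  have hcs : ⟪x, y⟫ ≤ ‖x‖ * ‖y‖ := real_inner_le_norm x y
  have hsq : Real.sqrt (a ^ 2 + b ^ 2) * Real.sqrt (a ^ 2 + b ^ 2) = a ^ 2 + b ^ 2 :=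
    Real.mul_self_sqrt hs.le
  rw [div_mul_eq_mul_div, div_le_iff₀ hs]
  calc H₀ * ⟪x, y⟫ ≤ H₀ * (‖x‖ * ‖y‖) := by
        exact mul_le_mul_of_nonneg_left hcs hH₀
    _ = (H₀ * ‖x‖) * Real.sqrt (a ^ 2 + b ^ 2) := by rw [hny]; ring
    _ ≤ (H * Real.sqrt (a ^ 2 + b ^ 2)) * Real.sqrt (a ^ 2 + b ^ 2) := by
        exact mul_le_mul_of_nonneg_right key (Real.sqrt_nonneg _)
    _ = H * (a ^ 2 + b ^ 2) := by rw [mul_assoc, hsq]
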